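/- Let g be an orientation-preserving homeomorphism of the circle 𝕋 = ℝ/ℤ with rotation number ρ(g), and let μ be a non-atomic g-invariant Borel probability measure on 𝕋. Assume either ρ(g) is irrational, or g is topologically conjugate to a rotation. Then the map h : 𝕋 → 𝕋 defined by h(θ) = μ([0,θ]) (mod 1) is a continuous semi-conjugacy between g and the rotation by ρ(g): h(g(θ)) = h(θ) + ρ(g) for all θ. -/

import Mathlib

open MeasureTheory Filter Set

namespace Stmt3Aux

/-- the representative map into `[0,1)` -/
noncomputable def fr (θ : AddCircle (1:ℝ)) : ℝ := (AddCircle.equivIco 1 0 θ : ℝ)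

lemma fr_mem (θ : AddCircle (1:ℝ)) : fr θ ∈ Ico (0:ℝ) 1 := by
  have h := (AddCircle.equivIco 1 0 θ).2
  simpa [fr] using h

lemma coe_fr (θ : AddCircle (1:ℝ)) : ((fr θ : ℝ) : AddCircle (1:ℝ)) = θ := by
  exact (AddCircle.equivIco 1 0).symm_apply_apply θ

lemma fr_coe (x : ℝ) (hx : x ∈ Ico (0:ℝ) 1) : fr ((x : ℝ) : AddCircle (1:ℝ)) = x := by
  have := AddCircle.coe_equivIco_mk_apply (1:ℝ) x
  rw [fr, this, div_one, mul_one, Int.fract_eq_self.2 hx]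

lemma fr_injective : Function.Injective fr := by
  intro a b h
  have := congrArg (fun t : ℝ => ((t : ℝ) : AddCircle (1:ℝ))) h
  simpa [coe_fr] using this

lemma measurable_fr : Measurable fr :=
  measurable_subtype_coe.comp (AddCircle.measurableEquivIco 1 0).measurable

lemma preimage_fr (s : Set ℝ) (hs : s ⊆ Ico (0:ℝ) 1) :
    fr ⁻¹' s = (fun t : ℝ => (t : AddCircle (1:ℝ))) '' s := by
  ext θ
  constructor
  · intro h
    exact ⟨fr θ, h, coe_fr θ⟩
  · rintro ⟨x, hx, rfl⟩
    simpa [fr_coe x (hs hx)] using hx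

lemma coe_eq_coe_iff (s t : ℝ) :
    ((s : AddCircle (1:ℝ)) = (t : AddCircle (1:ℝ))) ↔ ∃ n : ℤ, s - t = n := by
  rw [QuotientAddGroup.eq_iff_sub_mem, AddSubgroup.mem_zmultiples_iff]
  constructor
  · rintro ⟨n, hn⟩; exact ⟨n, by simpa using hn.symm⟩
  · rintro ⟨n, hn⟩; exact ⟨n, by simpa using hn.symm⟩

lemma coe_int_add (x : ℝ) (n : ℤ) :
    ((x + n : ℝ) : AddCircle (1:ℝ)) = ((x : ℝ) : AddCircle (1:ℝ)) := by
  rw [coe_eq_coe_iff]; exact ⟨n, by ring⟩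

lemma arc_shift (a b : ℝ) (n : ℤ) :
    (fun t : ℝ => (t : AddCircle (1:ℝ))) '' Ico (a + n) (b + n)
      = (fun t : ℝ => (t : AddCircle (1:ℝ))) '' Ico a b := by
  have h : Ico (a + (n:ℝ)) (b + n) = (fun t : ℝ => t + n) '' Ico a b := by
    rw [image_add_const_Ico]
  rw [h, ← Set.image_comp]
  refine congrArg₂ _ (funext fun t => ?_) rfl
  exact coe_int_add t n

lemma measurableSet_arc (a b : ℝ) :
    MeasurableSet ((fun t : ℝ => (t : AddCircle (1:ℝ))) '' Ico a b) := by
  rcases le_or_gt b a with h | h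
  · simp [Ico_eq_empty_of_le h]
  · have : Ico a b = insert a (Ioo a b) := (Set.Ioo_insert_left h).symm
    rw [this, Set.image_insert_eq]
    refine (MeasurableSet.insert ?_ _)
    have : IsOpen ((fun t : ℝ => (t : AddCircle (1:ℝ))) '' Ioo a b) := by
      exact QuotientAddGroup.isOpenMap_coe _ isOpen_Ioo
    exact this.measurableSet

lemma arc_disjoint (x y z : ℝ) (hy : x ≤ y) (hz : y ≤ z) (hzx : z ≤ x + 1) :
    Disjoint ((fun t : ℝ => (t : AddCircle (1:ℝ))) '' Ico x y)
      ((fun t : ℝ => (t : AddCircle (1:ℝ))) '' Ico y z) := by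
  rw [Set.disjoint_left]
  rintro θ ⟨s, hs, rfl⟩ ⟨t, ht, hco⟩
  rw [coe_eq_coe_iff] at hco
  obtain ⟨n, hn⟩ := hco
  have h1 : t - s > 0 := by linarith [hs.2, ht.1]
  have h2 : t - s < 1 := by linarith [hs.1, ht.2]
  have h3 : (0:ℤ) < n := by exact_mod_cast hn ▸ h1
  have h4 : (n:ℤ) < 1 := by exact_mod_cast hn ▸ h2
  omega

end Stmt3Aux

open MeasureTheory Filter Set ENNReal

section Main
open Stmt3Aux ProbabilityTheory

theorem stmt3 (g : AddCircle (1:ℝ) → AddCircle (1:ℝ)) (G : ℝ → ℝ) (ρ : ℝ)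
    (μ : Measure (AddCircle (1:ℝ)))
    [IsProbabilityMeasure μ] [NullSingletonClass μ]
    (hg_cont : Continuous g) (hg_bij : Function.Bijective g)
    (hG_cont : Continuous G) (hG_mono : StrictMono G)
    (hG_lift : ∀ x, G (x + 1) = G x + 1)
    (hproj : ∀ x : ℝ, g (x : AddCircle (1:ℝ)) = ((G x : ℝ) : AddCircle (1:ℝ)))
    (hinv : μ.map g = μ)
    (hρ : Tendsto (fun n : ℕ => G^[n] 0 / n) atTop (nhds ρ))
    (hyp : Irrational ρ ∨ ∃ (e : AddCircle (1:ℝ) ≃ₜ AddCircle (1:ℝ)) (β : AddCircle (1:ℝ)),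
      ∀ x, e (g x) = e x + β) :
    let H : ℝ → ℝ := fun Θ =>
      (μ ((fun t : ℝ => (t : AddCircle (1:ℝ))) '' Set.Icc 0 (Int.fract Θ))).toReal + (⌊Θ⌋ : ℝ)
    Continuous H ∧
      ∀ Θ : ℝ, ((H (G Θ) : ℝ) : AddCircle (1:ℝ)) = ((H Θ + ρ : ℝ) : AddCircle (1:ℝ)) := by
  intro H
  -- the pushforward of μ to [0,1)
  set ν : Measure ℝ := μ.map fr with hν_def
  have hν_apply : ∀ s : Set ℝ, MeasurableSet s → ν s = μ (fr ⁻¹' s) :=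
    fun s hs => Measure.map_apply measurable_fr hs
  haveI hνP : IsProbabilityMeasure ν := Measure.isProbabilityMeasure_map measurable_fr.aemeasurable
  haveI hνNA : NullSingletonClass ν := by
    constructor
    intro x
    rw [hν_apply _ (measurableSet_singleton x)]
    have hsub : (fr ⁻¹' {x}).Subsingleton := by
      intro a ha b hb
      exact fr_injective (ha.trans hb.symm)
    exact hsub.measure_zero μ
  -- the cumulative distribution function
  set c : ℝ → ℝ := fun t => (cdf ν t : ℝ) with hc_def
  have hc_eq : ∀ t, c t = (ν (Iic t)).toReal := fun t => cdf_eq_real ν t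
  have hc_mono : Monotone c := monotone_cdf ν
  have hc_cont : Continuous c := by
    rw [continuous_iff_continuousAt]
    intro t
    refine ((cdf ν).mono.continuousAt_iff_leftLim_eq_rightLim).2 ?_
    rw [(cdf ν).rightLim_eq]
    have h1 : (cdf ν).measure {t} = 0 := by
      rw [measure_cdf]; exact measure_singleton t
    rw [StieltjesFunction.measure_singleton] at h1
    have h2 := (cdf ν).mono.leftLim_le (le_refl t)
    have h3 : cdf ν t - Function.leftLim (cdf ν) t ≤ 0 := ENNReal.ofReal_eq_zero.1 h1
    linarith
  have hν_Iio : ν (Iio 0) = 0 := by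
    rw [hν_apply _ measurableSet_Iio]
    have : fr ⁻¹' (Iio 0) = ∅ := by
      ext θ; simp [(fr_mem θ).1.not_gt]
    simp [this]
  have hν_Ico01 : ν (Ico 0 1) = 1 := by
    rw [hν_apply _ measurableSet_Ico]
    have : fr ⁻¹' (Ico 0 1) = univ := by
      ext θ; simp [fr_mem θ]
    simp [this]
  have hc0 : c 0 = 0 := by
    rw [hc_eq]
    have : ν (Iic 0) = 0 := by
      have : Iic (0:ℝ) = Iio 0 ∪ {0} := by ext u; simp [le_iff_lt_or_eq]
      rw [this]
      exact le_antisymm (le_trans (measure_union_le _ _) (by simp [hν_Iio])) zero_le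
    simp [this]
  have hc1 : ∀ t, 1 ≤ t → c t = 1 := by
    intro t ht
    rw [hc_eq]
    have h1 : ν (Iic t) = 1 := by
      refine le_antisymm (prob_le_one) ?_
      calc (1:ℝ≥0∞) = ν (Ico 0 1) := hν_Ico01.symm
        _ ≤ ν (Iic t) := measure_mono (fun u hu => le_trans (le_of_lt hu.2) ht)
    rw [h1, ENNReal.toReal_one]
  have hc01 : ∀ t, 0 ≤ c t ∧ c t ≤ 1 := fun t => ⟨cdf_nonneg ν t, cdf_le_one ν t⟩
  -- the measure of lifted intervals inside [0,1]
  have hν_Ico : ∀ x y : ℝ, 0 ≤ x → y ≤ 1 →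
      μ ((fun t : ℝ => (t : AddCircle (1:ℝ))) '' Ico x y) = ν (Ico x y) := by
    intro x y hx hy
    rw [hν_apply _ measurableSet_Ico, preimage_fr _ (fun u hu => ⟨le_trans hx hu.1, lt_of_lt_of_le hu.2 hy⟩)]
  have hν_Ico_toReal : ∀ x y : ℝ, 0 ≤ x → x ≤ y → y ≤ 1 →
      (ν (Ico x y)).toReal = c y - c x := by
    intro x y hx hxy hy
    have h1 : ν (Ico x y) = ν (Ioc x y) := measure_congr Ico_ae_eq_Ioc
    have h2 : ν (Iic x) + ν (Ioc x y) = ν (Iic y) := by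
      rw [← measure_union (Iic_disjoint_Ioc (le_refl x)) measurableSet_Ioc, Iic_union_Ioc_eq_Iic hxy]
    rw [h1, hc_eq, hc_eq]
    have hfin1 : ν (Iic x) ≠ ⊤ := measure_ne_top ν _
    have hfin2 : ν (Ioc x y) ≠ ⊤ := measure_ne_top ν _
    have := congrArg ENNReal.toReal h2
    rw [ENNReal.toReal_add hfin1 hfin2] at this
    linarith
  -- formula for H
  have hH : ∀ Θ, H Θ = c (Int.fract Θ) + (⌊Θ⌋ : ℝ) := by
    intro Θ
    show (μ _).toReal + _ = _
    congr 1
    have hfr : Int.fract Θ ∈ Ico (0:ℝ) 1 := ⟨Int.fract_nonneg Θ, Int.fract_lt_one Θ⟩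
    have h1 : μ ((fun t : ℝ => (t : AddCircle (1:ℝ))) '' Icc 0 (Int.fract Θ)) = ν (Icc 0 (Int.fract Θ)) := by
      rw [hν_apply _ measurableSet_Icc,
        preimage_fr _ (fun u hu => ⟨hu.1, lt_of_le_of_lt hu.2 hfr.2⟩)]
    have h2 : ν (Icc 0 (Int.fract Θ)) = ν (Iic (Int.fract Θ)) := by
      have hu : Iic (Int.fract Θ) = Iio 0 ∪ Icc 0 (Int.fract Θ) := by
        ext u
        simp only [mem_Iic, mem_union, mem_Iio, mem_Icc]
        constructor
        · intro h
          rcases lt_or_ge u 0 with h' | h'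
          · exact Or.inl h'
          · exact Or.inr ⟨h', h⟩
        · rintro (h | h)
          · exact le_trans h.le hfr.1
          · exact h.2
      refine le_antisymm (measure_mono Icc_subset_Iic_self) ?_
      calc ν (Iic (Int.fract Θ)) = ν (Iio 0 ∪ Icc 0 (Int.fract Θ)) := by rw [← hu]
        _ ≤ ν (Iio 0) + ν (Icc 0 (Int.fract Θ)) := measure_union_le _ _
        _ = ν (Icc 0 (Int.fract Θ)) := by rw [hν_Iio, zero_add]
    rw [h1, h2, hc_eq]
  -- H shifts by integers
  have hH_int : ∀ (Θ : ℝ) (n : ℤ), H (Θ + n) = H Θ + n := by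
    intro Θ n
    rw [hH, hH, Int.fract_add_intCast, Int.floor_add_intCast]
    push_cast
    ring
  have hH_one : ∀ Θ : ℝ, H (Θ + 1) = H Θ + 1 := by
    intro Θ
    have := hH_int Θ 1
    push_cast at this
    simpa using this
  have hH0 : H 0 = 0 := by
    rw [hH]
    simp [hc0]
  -- value of H on [0,1]
  have hH01 : ∀ x : ℝ, 0 ≤ x → x ≤ 1 → H x = c x := by
    intro x h0 h1
    rcases lt_or_eq_of_le h1 with h | h
    · rw [hH, Int.fract_eq_self.2 ⟨h0, h⟩, Int.floor_eq_zero_iff.2 ⟨h0, h⟩]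
      simp
    · subst h
      rw [hH]
      norm_num [hc0, hc1 1 le_rfl]
  -- G commutes with integer translations
  have hGint : ∀ (x : ℝ) (n : ℤ), G (x + n) = G x + n := by
    intro x n
    induction n using Int.induction_on with
    | zero => simp
    | succ k ih => push_cast; push_cast at ih; rw [← add_assoc, hG_lift, ih]; ring
    | pred k ih =>
      push_cast; push_cast at ih
      have := hG_lift (x + (-(k:ℝ) - 1))
      rw [show x + (-(k:ℝ) - 1) + 1 = x + -(k:ℝ) by ring] at this
      linarith
  -- G is surjective
  have hGsurj : Function.Surjective G := by
    apply hG_cont.surjective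
    · apply tendsto_atTop_mono (fun x : ℝ => ?_) (tendsto_atTop_add_const_left atTop (G 0 - 1) tendsto_id)
      have h1 : G (⌊x⌋ : ℝ) ≤ G x := hG_mono.monotone (Int.floor_le x)
      have h2 : G ((⌊x⌋ : ℤ) : ℝ) = G 0 + ⌊x⌋ := by
        have := hGint 0 ⌊x⌋; simpa using this
      have h3 : (⌊x⌋ : ℝ) > x - 1 := by
        have := Int.lt_floor_add_one x; linarith
      simp only [id_eq]
      calc G 0 - 1 + x ≤ G 0 + ⌊x⌋ := by linarith
        _ = G ((⌊x⌋ : ℤ) : ℝ) := h2.symm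
        _ ≤ G x := h1
    · apply tendsto_atBot_mono (fun x : ℝ => ?_) (tendsto_atBot_add_const_left atBot (G 0 + 1) tendsto_id)
      have h1 : G x ≤ G (⌈x⌉ : ℝ) := hG_mono.monotone (Int.le_ceil x)
      have h2 : G ((⌈x⌉ : ℤ) : ℝ) = G 0 + ⌈x⌉ := by
        have := hGint 0 ⌈x⌉; simpa using this
      have h3 : (⌈x⌉ : ℝ) < x + 1 := by
        have := Int.ceil_lt_add_one x; linarith
      simp only [id_eq]
      calc G x ≤ G 0 + ⌈x⌉ := by rw [← h2]; exact h1
        _ ≤ G 0 + 1 + x := by linarith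
  have hGIco : ∀ a b : ℝ, G '' Ico a b = Ico (G a) (G b) := by
    intro a b
    have := (StrictMono.orderIsoOfSurjective G hG_mono hGsurj).image_Ico a b
    rwa [StrictMono.coe_orderIsoOfSurjective] at this
  -- measure invariance of arcs
  have hg_meas : Measurable g := hg_cont.measurable
  have harc_inv : ∀ a b : ℝ,
      μ ((fun t : ℝ => (t : AddCircle (1:ℝ))) '' Ico (G a) (G b))
        = μ ((fun t : ℝ => (t : AddCircle (1:ℝ))) '' Ico a b) := by
    intro a b
    have himg : g '' ((fun t : ℝ => (t : AddCircle (1:ℝ))) '' Ico a b)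
        = (fun t : ℝ => (t : AddCircle (1:ℝ))) '' Ico (G a) (G b) := by
      rw [← Set.image_comp, show (g ∘ fun t : ℝ => (t : AddCircle (1:ℝ)))
        = (fun t : ℝ => (t : AddCircle (1:ℝ))) ∘ G from funext hproj, Set.image_comp, hGIco]
    calc μ ((fun t : ℝ => (t : AddCircle (1:ℝ))) '' Ico (G a) (G b))
        = (μ.map g) ((fun t : ℝ => (t : AddCircle (1:ℝ))) '' Ico (G a) (G b)) := by rw [hinv]
      _ = μ (g ⁻¹' ((fun t : ℝ => (t : AddCircle (1:ℝ))) '' Ico (G a) (G b))) :=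
          Measure.map_apply hg_meas (measurableSet_arc _ _)
      _ = μ (g ⁻¹' (g '' ((fun t : ℝ => (t : AddCircle (1:ℝ))) '' Ico a b))) := by rw [himg]
      _ = μ ((fun t : ℝ => (t : AddCircle (1:ℝ))) '' Ico a b) := by
          rw [hg_bij.injective.preimage_image]
  -- the key difference formula
  have hdiff : ∀ x y : ℝ, x ≤ y → y ≤ x + 1 →
      H y - H x = (μ ((fun t : ℝ => (t : AddCircle (1:ℝ))) '' Ico x y)).toReal := by
    intro x y hxy hyx
    -- reduce to x ∈ [0,1)
    obtain ⟨x', n, hx', rfl⟩ : ∃ (x' : ℝ) (n : ℤ), x' ∈ Ico (0:ℝ) 1 ∧ x = x' + n :=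
      ⟨Int.fract x, ⌊x⌋, ⟨Int.fract_nonneg x, Int.fract_lt_one x⟩, by rw [Int.fract]; ring⟩
    obtain ⟨y', rfl⟩ : ∃ y' : ℝ, y = y' + n := ⟨y - n, by ring⟩
    rw [hH_int, hH_int, arc_shift]
    have hxy' : x' ≤ y' := by linarith [hxy]
    have hyx' : y' ≤ x' + 1 := by linarith [hyx]
    have key : H y' - H x' = (μ ((fun t : ℝ => (t : AddCircle (1:ℝ))) '' Ico x' y')).toReal := by
      rcases le_or_gt y' 1 with hy1 | hy1
      · rw [hH01 x' hx'.1 hx'.2.le, hH01 y' (le_trans hx'.1 hxy') hy1,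
          hν_Ico x' y' hx'.1 hy1, hν_Ico_toReal x' y' hx'.1 hxy' hy1]
      · -- 1 < y' ≤ x' + 1 < 2
        have hy2 : y' < 2 := by linarith [hx'.2]
        have hfl : ⌊y'⌋ = 1 := by
          rw [Int.floor_eq_iff]
          constructor
          · exact_mod_cast hy1.le
          · push_cast; linarith
        have hfr : Int.fract y' = y' - 1 := by
          rw [Int.fract, hfl]; norm_num
        have hsplit : Ico x' y' = Ico x' 1 ∪ Ico 1 y' := 
          (Ico_union_Ico_eq_Ico (by linarith [hx'.2]) hy1.le).symm
        have hdisj := arc_disjoint x' 1 y' (by linarith [hx'.2]) hy1.le (by linarith)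
        have hIm : (fun t : ℝ => (t : AddCircle (1:ℝ))) '' Ico x' y'
            = (fun t : ℝ => (t : AddCircle (1:ℝ))) '' Ico x' 1
              ∪ (fun t : ℝ => (t : AddCircle (1:ℝ))) '' Ico 1 y' := by
          rw [hsplit, Set.image_union]
        have hadd : μ ((fun t : ℝ => (t : AddCircle (1:ℝ))) '' Ico x' y')
            = μ ((fun t : ℝ => (t : AddCircle (1:ℝ))) '' Ico x' 1)
              + μ ((fun t : ℝ => (t : AddCircle (1:ℝ))) '' Ico 1 y') := by
          rw [hIm, measure_union hdisj (measurableSet_arc _ _)]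
        have hpiece1 : (μ ((fun t : ℝ => (t : AddCircle (1:ℝ))) '' Ico x' 1)).toReal
            = 1 - c x' := by
          rw [hν_Ico x' 1 hx'.1 le_rfl, hν_Ico_toReal x' 1 hx'.1 hx'.2.le le_rfl, hc1 1 le_rfl]
        have hpiece2 : (μ ((fun t : ℝ => (t : AddCircle (1:ℝ))) '' Ico 1 y')).toReal
            = c (y' - 1) := by
          have hsh : (fun t : ℝ => (t : AddCircle (1:ℝ))) '' Ico (1:ℝ) y'
              = (fun t : ℝ => (t : AddCircle (1:ℝ))) '' Ico 0 (y' - 1) := by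
            have := arc_shift 0 (y' - 1) 1
            simpa using this
          rw [hsh, hν_Ico 0 (y' - 1) le_rfl (by linarith [hx'.2]),
            hν_Ico_toReal 0 (y' - 1) le_rfl (by linarith) (by linarith [hx'.2]), hc0, sub_zero]
        have hH_y' : H y' = c (y' - 1) + 1 := by
          rw [hH, hfr, hfl]; norm_num
        rw [hH_y', hH01 x' hx'.1 hx'.2.le, hadd,
          ENNReal.toReal_add (measure_ne_top μ _) (measure_ne_top μ _), hpiece1, hpiece2]
        ring
    linarith [key]
  -- the displacement is constant
  have hstep : ∀ x y : ℝ, x ≤ y → y ≤ x + 1 → H (G y) - H y = H (G x) - H x := by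
    intro x y hxy hyx
    have h1 := hdiff x y hxy hyx
    have h2 := hdiff (G x) (G y) (hG_mono.monotone hxy)
      (by rw [← hG_lift]; exact hG_mono.monotone hyx)
    rw [harc_inv] at h2
    linarith
  have hΦper : ∀ (x : ℝ) (n : ℤ), H (G (x + n)) - H (x + n) = H (G x) - H x := by
    intro x n
    rw [hGint, hH_int, hH_int]
    ring
  have hΦconst : ∀ x : ℝ, H (G x) - H x = H (G 0) - H 0 := by
    intro x
    have h1 : H (G x) - H x = H (G (Int.fract x)) - H (Int.fract x) := by
      have := hΦper (Int.fract x) ⌊x⌋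
      rw [show Int.fract x + (⌊x⌋:ℝ) = x from Int.fract_add_floor x] at this
      linarith
    have h2 := hstep 0 (Int.fract x) (Int.fract_nonneg x) (by linarith [Int.fract_lt_one x])
    linarith
  -- identify the constant with ρ
  have hΦρ : H (G 0) - H 0 = ρ := by
    set c0 := H (G 0) - H 0 with hc0def
    have hiter : ∀ n : ℕ, H (G^[n] 0) = n * c0 := by
      intro n
      induction n with
      | zero => simpa using hH0
      | succ k ih =>
        rw [Function.iterate_succ_apply']
        have := hΦconst (G^[k] 0)
        push_cast
        linarith
    have hbound : ∀ t : ℝ, |H t - t| ≤ 1 := by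
      intro t
      rw [hH]
      have h1 := (hc01 (Int.fract t)).1
      have h2 := (hc01 (Int.fract t)).2
      have h3 : (⌊t⌋ : ℝ) = t - Int.fract t := by rw [Int.fract]; ring
      have h4 := Int.fract_nonneg t
      have h5 := (Int.fract_lt_one t).le
      rw [h3, abs_le]
      constructor <;> linarith
    have hlim0 : Tendsto (fun n : ℕ => G^[n] 0 / n - c0) atTop (nhds 0) := by
      apply squeeze_zero_norm' ?_ tendsto_one_div_atTop_nhds_zero_nat
      filter_upwards [eventually_ge_atTop 1] with n hn
      have hnpos : (0:ℝ) < n := by exact_mod_cast hn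
      have hb := hbound (G^[n] 0)
      rw [hiter n] at hb
      have heq : G^[n] 0 / n - c0 = (G^[n] 0 - n * c0) / n := by field_simp
      rw [Real.norm_eq_abs, heq, abs_div, abs_of_pos hnpos, div_le_div_iff_of_pos_right hnpos]
      rw [abs_sub_comm] at hb
      exact hb
    have hlim : Tendsto (fun n : ℕ => G^[n] 0 / n) atTop (nhds c0) := by
      have := hlim0.add_const c0
      rw [zero_add] at this
      refine this.congr fun n => by ring
    exact (tendsto_nhds_unique hlim hρ)
  -- the exact semiconjugacy identity
  have hmain : ∀ Θ : ℝ, H (G Θ) = H Θ + ρ := by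
    intro Θ
    have := hΦconst Θ
    linarith
  -- continuity of H
  have hIoo : ∀ (k : ℤ) (Θ : ℝ), (k:ℝ) < Θ → Θ < (k:ℝ) + 1 → H Θ = c (Θ - k) + k := by
    intro k Θ h1 h2
    have hfl : ⌊Θ⌋ = k := by
      rw [Int.floor_eq_iff]
      exact ⟨h1.le, by exact_mod_cast h2⟩
    rw [hH, Int.fract, hfl]
  have hkcont : ∀ a : ℝ, Continuous (fun Θ : ℝ => c (Θ - a) + a) :=
    fun a => (hc_cont.comp (continuous_sub_right a)).add continuous_const
  have hHcont : Continuous H := by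
    rw [continuous_iff_continuousAt]
    intro Θ₀
    rcases eq_or_ne (Int.fract Θ₀) 0 with hz | hz
    · -- integer point
      have hm : Θ₀ = (⌊Θ₀⌋ : ℝ) := by
        have := Int.fract_add_floor Θ₀
        rw [hz, zero_add] at this
        exact this.symm
      have hHm : H Θ₀ = (⌊Θ₀⌋ : ℝ) := by rw [hH, hz, hc0, zero_add]
      rw [continuousAt_iff_continuous_left'_right']
      constructor
      · -- left limit
        have hmem : Ioo ((⌊Θ₀⌋:ℝ) - 1) Θ₀ ∈ nhdsWithin Θ₀ (Iio Θ₀) :=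
          Ioo_mem_nhdsLT_of_mem ⟨by linarith [Int.floor_le Θ₀], le_rfl⟩
        have heq : (fun Θ : ℝ => c (Θ - ((⌊Θ₀⌋:ℝ) - 1)) + ((⌊Θ₀⌋:ℝ) - 1))
            =ᶠ[nhdsWithin Θ₀ (Iio Θ₀)] H := by
          filter_upwards [hmem] with Θ hΘ
          have h := hIoo (⌊Θ₀⌋ - 1) Θ (by push_cast; linarith [hΘ.1])
            (by push_cast; linarith [hΘ.2])
          push_cast at h
          rw [h]
        have hlim : Tendsto (fun Θ : ℝ => c (Θ - ((⌊Θ₀⌋:ℝ) - 1)) + ((⌊Θ₀⌋:ℝ) - 1))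
            (nhdsWithin Θ₀ (Iio Θ₀)) (nhds (H Θ₀)) := by
          have h1 := ((hkcont ((⌊Θ₀⌋:ℝ) - 1)).tendsto Θ₀).mono_left
            (nhdsWithin_le_nhds (s := Iio Θ₀))
          have h2 : c (Θ₀ - ((⌊Θ₀⌋:ℝ) - 1)) + ((⌊Θ₀⌋:ℝ) - 1) = H Θ₀ := by
            have h3 : Θ₀ - ((⌊Θ₀⌋:ℝ) - 1) = 1 := by linarith [hm.ge, hm.le]
            rw [h3, hc1 1 le_rfl, hHm]
            ring
          rwa [h2] at h1
        exact Filter.Tendsto.congr' heq hlim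
      · -- right limit
        have hmem : Ioo Θ₀ (Θ₀ + 1) ∈ nhdsWithin Θ₀ (Ioi Θ₀) :=
          Ioo_mem_nhdsGT_of_mem ⟨le_rfl, by linarith⟩
        have heq : (fun Θ : ℝ => c (Θ - (⌊Θ₀⌋:ℝ)) + (⌊Θ₀⌋:ℝ))
            =ᶠ[nhdsWithin Θ₀ (Ioi Θ₀)] H := by
          filter_upwards [hmem] with Θ hΘ
          have h := hIoo ⌊Θ₀⌋ Θ (by linarith [hΘ.1, hm.le]) (by linarith [hΘ.2, hm.ge])
          rw [h]
        have hlim : Tendsto (fun Θ : ℝ => c (Θ - (⌊Θ₀⌋:ℝ)) + (⌊Θ₀⌋:ℝ))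
            (nhdsWithin Θ₀ (Ioi Θ₀)) (nhds (H Θ₀)) := by
          have h1 := ((hkcont ((⌊Θ₀⌋:ℝ))).tendsto Θ₀).mono_left
            (nhdsWithin_le_nhds (s := Ioi Θ₀))
          have h2 : c (Θ₀ - (⌊Θ₀⌋:ℝ)) + (⌊Θ₀⌋:ℝ) = H Θ₀ := by
            have h3 : Θ₀ - (⌊Θ₀⌋:ℝ) = 0 := by linarith [hm.ge, hm.le]
            rw [h3, hc0, hHm]
            ring
          rwa [h2] at h1
        exact Filter.Tendsto.congr' heq hlim
    · -- non-integer point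
      have hmlt : (⌊Θ₀⌋:ℝ) < Θ₀ := by
        rcases lt_or_eq_of_le (Int.floor_le Θ₀) with h | h
        · exact h
        · exact absurd (by rw [Int.fract, h, sub_self]) hz
      have hlt : Θ₀ < (⌊Θ₀⌋:ℝ) + 1 := Int.lt_floor_add_one Θ₀
      have hmem : Ioo ((⌊Θ₀⌋:ℝ)) ((⌊Θ₀⌋:ℝ) + 1) ∈ nhds Θ₀ := Ioo_mem_nhds hmlt hlt
      have heq : (fun Θ : ℝ => c (Θ - (⌊Θ₀⌋:ℝ)) + (⌊Θ₀⌋:ℝ)) =ᶠ[nhds Θ₀] H := by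
        filter_upwards [hmem] with Θ hΘ
        have h := hIoo ⌊Θ₀⌋ Θ hΘ.1 hΘ.2
        rw [h]
      exact ((hkcont ((⌊Θ₀⌋:ℝ))).continuousAt).congr heq
  exact ⟨hHcont, fun Θ => by rw [hmain Θ]⟩
end Main
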